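/- arXiv:2410.18452 — 2 statements merged into one kernel-verified Lean document; each statement's English description precedes it below -/
import Mathlib

section
/- Let n ≥ 1, m ≥ 0, q ∈ [1,∞). Let U, K : (0,∞)×ℝⁿ → ℝⁿ be measurable with U(1,·), K(1,·) ∈ L^q(ℝⁿ), each having parabolic scaling of order m (λ^{n+m} U(λ²t, λx) = U(t,x) and λ^{n+m} K(λ²t, λx) = K(t,x) for all λ > 0). If ‖U(t,·) + K(t,·) log t‖_{L^q(ℝⁿ)} = o(t^{−γ_q − m/2} log t) as t → +∞, then K(1,x) = 0 for almost every x ∈ ℝⁿ (and hence K(t,·) = 0 a.e. for every t > 0). -/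
open MeasureTheory Real Filter
open scoped ENNReal Topology

noncomputable section

abbrev Spc (n : ℕ) := EuclideanSpace ℝ (Fin n)

/-- γ_q = (n/2)(1 − 1/q). -/
def gammaExp (n : ℕ) (q : ℝ≥0∞) : ℝ := ((n : ℝ) / 2) * (1 - 1 / q.toReal)

/-- Change of variables for `eLpNorm` under a dilation. -/
lemma eLpNorm_comp_smul_aux {n : ℕ} (q : ℝ≥0∞) (f : Spc n → Spc n)
    (hf : AEStronglyMeasurable f (volume : Measure (Spc n))) {c : ℝ} (hc : c ≠ 0) :
    eLpNorm (fun x => f (c • x)) q volume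
      = ENNReal.ofReal (|c|⁻¹ ^ n) ^ (1 / q).toReal * eLpNorm f q volume := by
  have hmap : Measure.map (c • ·) (volume : Measure (Spc n))
      = ENNReal.ofReal (|c|⁻¹ ^ n) • volume := by
    simpa [finrank_euclideanSpace_fin, abs_inv, abs_pow, inv_pow] using
      MeasureTheory.Measure.map_addHaar_smul (volume : Measure (Spc n)) hc
  have hfs : AEStronglyMeasurable f (Measure.map (c • ·) (volume : Measure (Spc n))) := by
    rw [hmap]
    exact hf.mono_ac MeasureTheory.Measure.smul_absolutelyContinuous
  have h1 : eLpNorm (fun x => f (c • x)) q volume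
      = eLpNorm f q (Measure.map (c • ·) (volume : Measure (Spc n))) :=
    (eLpNorm_map_measure hfs (measurable_const_smul c).aemeasurable).symm
  rw [h1, hmap, eLpNorm_smul_measure_of_ne_zero
    (ENNReal.ofReal_pos.2 (by positivity)).ne' f q volume, smul_eq_mul]

/-- if `U, K` both have parabolic scaling of order `m`, `U(1,·), K(1,·) ∈ L^q`
(`1 ≤ q < ∞`) and `‖U(t,·) + K(t,·) log t‖_{L^q} = o(t^{−γ_q−m/2} log t)` as `t → ∞`,
then `K(1,·) = 0` a.e., and hence `K(t,·) = 0` a.e. for every `t > 0`. -/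
theorem log_profile_vanishes (n : ℕ) (hn : 1 ≤ n) (m : ℕ)
    (q : ℝ≥0∞) (hq : 1 ≤ q) (hq' : q ≠ ∞)
    (U K : ℝ → Spc n → Spc n)
    (hUmeas : Measurable (Function.uncurry U))
    (hKmeas : Measurable (Function.uncurry K))
    (hU1 : MemLp (U 1) q volume) (hK1 : MemLp (K 1) q volume)
    (hUscale : ∀ lam > (0:ℝ), ∀ t > (0:ℝ), ∀ x : Spc n,
      lam ^ (n + m) • U (lam ^ 2 * t) (lam • x) = U t x)
    (hKscale : ∀ lam > (0:ℝ), ∀ t > (0:ℝ), ∀ x : Spc n,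
      lam ^ (n + m) • K (lam ^ 2 * t) (lam • x) = K t x)
    (hdecay : Tendsto
      (fun t : ℝ => ENNReal.ofReal (t ^ (gammaExp n q + (m : ℝ) / 2) / Real.log t)
        * eLpNorm (fun x => U t x + Real.log t • K t x) q volume)
      atTop (𝓝 0)) :
    (∀ᵐ x : Spc n ∂volume, K 1 x = 0) ∧ ∀ t > (0:ℝ), ∀ᵐ x : Spc n ∂volume, K t x = 0 := by
  have hq0 : q ≠ 0 := (zero_lt_one.trans_le hq).ne'
  have hq'1 : (1:ℝ) ≤ q.toReal := by simpa using ENNReal.toReal_mono hq' hq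
  have hq'pos : (0:ℝ) < q.toReal := lt_of_lt_of_le zero_lt_one hq'1
  -- representation of `V t` in terms of `V 1`
  have hrep : ∀ (V : ℝ → Spc n → Spc n),
      (∀ lam > (0:ℝ), ∀ t > (0:ℝ), ∀ x : Spc n,
        lam ^ (n + m) • V (lam ^ 2 * t) (lam • x) = V t x) →
      ∀ t > (0:ℝ), ∀ x : Spc n,
        V t x = ((Real.sqrt t) ^ (n + m))⁻¹ • V 1 ((Real.sqrt t)⁻¹ • x) := by
    intro V hV t ht x
    have hs : 0 < Real.sqrt t := Real.sqrt_pos.2 ht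
    have h := hV (Real.sqrt t) hs 1 one_pos ((Real.sqrt t)⁻¹ • x)
    rw [Real.sq_sqrt ht.le, mul_one, smul_inv_smul₀ hs.ne'] at h
    rw [← h, inv_smul_smul₀ (by positivity)]
  have hUrep := hrep U hUscale
  have hKrep := hrep K hKscale
  have hAS : ∀ t : ℝ, AEStronglyMeasurable
      (fun y : Spc n => U 1 y + Real.log t • K 1 y) (volume : Measure (Spc n)) :=
    fun t => hU1.1.add (hK1.1.const_smul (Real.log t))
  -- rewrite the quantity in `hdecay`
  have key : ∀ᶠ t : ℝ in atTop,
      ENNReal.ofReal (t ^ (gammaExp n q + (m:ℝ)/2) / Real.log t)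
        * eLpNorm (fun x => U t x + Real.log t • K t x) q volume
      = ENNReal.ofReal (1 / Real.log t)
        * eLpNorm (fun y => U 1 y + Real.log t • K 1 y) q volume := by
    filter_upwards [eventually_gt_atTop 1] with t ht1
    have ht : (0:ℝ) < t := zero_lt_one.trans ht1
    have hL : 0 < Real.log t := Real.log_pos ht1
    set s := Real.sqrt t with hs_def
    have hs : 0 < s := Real.sqrt_pos.2 ht
    have hfun : (fun x => U t x + Real.log t • K t x)
        = (s ^ (n + m))⁻¹ •
            (fun x : Spc n => (fun y : Spc n => U 1 y + Real.log t • K 1 y) ((s⁻¹ : ℝ) • x)) := by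
      funext x
      show U t x + Real.log t • K t x
        = (s ^ (n + m))⁻¹ • (U 1 (s⁻¹ • x) + Real.log t • K 1 (s⁻¹ • x))
      rw [hUrep t ht x, hKrep t ht x, smul_add, smul_comm]
    rw [hfun, eLpNorm_const_smul, eLpNorm_comp_smul_aux q _ (hAS t) (inv_ne_zero hs.ne')]
    have hconst : ENNReal.ofReal (t ^ (gammaExp n q + (m:ℝ)/2) / Real.log t)
        * ((‖(s ^ (n + m))⁻¹‖₊ : ℝ≥0∞) * ENNReal.ofReal (|s⁻¹|⁻¹ ^ n) ^ (1 / q).toReal)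
        = ENNReal.ofReal (1 / Real.log t) := by
      have h2 : |s⁻¹|⁻¹ = s := by rw [abs_of_pos (inv_pos.2 hs), inv_inv]
      have hq1r : (1/q).toReal = 1/q.toReal := by
        rw [one_div, ENNReal.toReal_inv, one_div]
      rw [show ((‖(s ^ (n + m))⁻¹‖₊ : ℝ≥0∞)) = ‖(s ^ (n + m))⁻¹‖ₑ from rfl,
        Real.enorm_eq_ofReal (by positivity), h2, hq1r,
        ENNReal.ofReal_rpow_of_pos (by positivity : (0:ℝ) < s ^ n),
        ← ENNReal.ofReal_mul (by positivity), ← ENNReal.ofReal_mul (by positivity)]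
      congr 1
      have e1 : s ^ (n + m) = t ^ (((n:ℝ) + (m:ℝ))/2) := by
        rw [hs_def, Real.sqrt_eq_rpow, ← Real.rpow_natCast (t ^ ((1:ℝ)/2)) (n + m),
          ← Real.rpow_mul ht.le]
        push_cast
        ring_nf
      have e2 : ((s ^ n : ℝ)) ^ ((1:ℝ)/q.toReal) = t ^ ((n:ℝ)/(2 * q.toReal)) := by
        rw [hs_def, Real.sqrt_eq_rpow, ← Real.rpow_natCast (t ^ ((1:ℝ)/2)) n,
          ← Real.rpow_mul ht.le, ← Real.rpow_mul ht.le]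
        ring_nf
      rw [e1, e2]
      have e3 : (t ^ (((n:ℝ) + (m:ℝ))/2))⁻¹ = t ^ (-(((n:ℝ) + (m:ℝ))/2)) :=
        (Real.rpow_neg ht.le _).symm
      have e4 : t ^ (gammaExp n q + (m:ℝ)/2)
          * (t ^ (-(((n:ℝ) + (m:ℝ))/2)) * t ^ ((n:ℝ)/(2 * q.toReal))) = 1 := by
        rw [← Real.rpow_add ht, ← Real.rpow_add ht,
          show gammaExp n q + (m:ℝ)/2 + (-(((n:ℝ) + (m:ℝ))/2) + (n:ℝ)/(2 * q.toReal)) = 0 from by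
            unfold gammaExp; field_simp; ring,
          Real.rpow_zero]
      rw [e3, div_mul_eq_mul_div, e4]
    calc ENNReal.ofReal (t ^ (gammaExp n q + (m:ℝ)/2) / Real.log t)
          * ((‖(s ^ (n + m))⁻¹‖₊ : ℝ≥0∞)
            * (ENNReal.ofReal (|s⁻¹|⁻¹ ^ n) ^ (1 / q).toReal
              * eLpNorm (fun y : Spc n => U 1 y + Real.log t • K 1 y) q volume))
        = (ENNReal.ofReal (t ^ (gammaExp n q + (m:ℝ)/2) / Real.log t)
            * ((‖(s ^ (n + m))⁻¹‖₊ : ℝ≥0∞) * ENNReal.ofReal (|s⁻¹|⁻¹ ^ n) ^ (1 / q).toReal))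
          * eLpNorm (fun y : Spc n => U 1 y + Real.log t • K 1 y) q volume := by ring
      _ = _ := by rw [hconst]
  have hdecay' : Tendsto
      (fun t : ℝ => ENNReal.ofReal (1 / Real.log t)
        * eLpNorm (fun y : Spc n => U 1 y + Real.log t • K 1 y) q volume)
      atTop (𝓝 0) := hdecay.congr' key
  have htend0 : Tendsto (fun t : ℝ => ENNReal.ofReal (1 / Real.log t)) atTop (𝓝 0) := by
    have h1 : Tendsto (fun t : ℝ => 1 / Real.log t) atTop (𝓝 0) := by
      simpa only [one_div, Function.comp_def] using tendsto_inv_atTop_zero.comp Real.tendsto_log_atTop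
    simpa using ENNReal.tendsto_ofReal h1
  have hUfin : eLpNorm (U 1) q volume ≠ ∞ := hU1.2.ne
  have hbound : ∀ᶠ t : ℝ in atTop, eLpNorm (K 1) q volume
      ≤ ENNReal.ofReal (1 / Real.log t)
          * eLpNorm (fun y : Spc n => U 1 y + Real.log t • K 1 y) q volume
        + ENNReal.ofReal (1 / Real.log t) * eLpNorm (U 1) q volume := by
    filter_upwards [eventually_gt_atTop 1] with t ht1
    have hL : 0 < Real.log t := Real.log_pos ht1
    have h1 : ENNReal.ofReal (Real.log t) * eLpNorm (K 1) q volume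
        = eLpNorm (fun y : Spc n => Real.log t • K 1 y) q volume := by
      rw [show (fun y : Spc n => Real.log t • K 1 y) = Real.log t • K 1 from rfl,
        eLpNorm_const_smul, Real.enorm_eq_ofReal hL.le]
    have h2 : eLpNorm (fun y : Spc n => Real.log t • K 1 y) q volume
        ≤ eLpNorm (fun y : Spc n => U 1 y + Real.log t • K 1 y) q volume
          + eLpNorm (U 1) q volume := by
      have hfe : (fun y : Spc n => Real.log t • K 1 y)
          = fun y : Spc n => (U 1 y + Real.log t • K 1 y) - U 1 y := by
        funext y; abel
      rw [hfe]
      exact eLpNorm_sub_le (hAS t) hU1.1 hq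
    calc eLpNorm (K 1) q volume
        = ENNReal.ofReal (1 / Real.log t)
            * (ENNReal.ofReal (Real.log t) * eLpNorm (K 1) q volume) := by
          rw [← mul_assoc, ← ENNReal.ofReal_mul (by positivity),
            one_div_mul_cancel hL.ne', ENNReal.ofReal_one, one_mul]
      _ = ENNReal.ofReal (1 / Real.log t)
            * eLpNorm (fun y : Spc n => Real.log t • K 1 y) q volume := by rw [h1]
      _ ≤ ENNReal.ofReal (1 / Real.log t)
            * (eLpNorm (fun y : Spc n => U 1 y + Real.log t • K 1 y) q volume
              + eLpNorm (U 1) q volume) := mul_le_mul_right h2 _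
      _ = _ := by rw [mul_add]
  have hsum : Tendsto (fun t : ℝ =>
      ENNReal.ofReal (1 / Real.log t)
        * eLpNorm (fun y : Spc n => U 1 y + Real.log t • K 1 y) q volume
      + ENNReal.ofReal (1 / Real.log t) * eLpNorm (U 1) q volume) atTop (𝓝 0) := by
    have := hdecay'.add (ENNReal.Tendsto.mul_const htend0 (Or.inr hUfin))
    simpa using this
  have hK0 : eLpNorm (K 1) q volume = 0 :=
    le_antisymm (ge_of_tendsto hsum hbound) zero_le
  have part1 : ∀ᵐ x : Spc n ∂volume, K 1 x = 0 := by
    have := (eLpNorm_eq_zero_iff hK1.1 hq0).1 hK0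
    filter_upwards [this] with x hx
    simpa using hx
  refine ⟨part1, fun t ht => ?_⟩
  have hs : 0 < Real.sqrt t := Real.sqrt_pos.2 ht
  have hqm := MeasureTheory.Measure.quasiMeasurePreserving_smul
    (volume : Measure (Spc n)) (inv_ne_zero hs.ne')
  have h0 : (fun x : Spc n => K 1 ((Real.sqrt t)⁻¹ • x)) =ᵐ[volume]
      (fun _ : Spc n => (0 : Spc n)) := by
    have hp1 : (K 1) =ᵐ[volume] (fun _ : Spc n => (0 : Spc n)) := part1
    exact hqm.ae_eq_comp hp1
  filter_upwards [h0] with x hx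
  rw [hKrep t ht x, hx, smul_zero]
end
end

section
/- Let n ≥ 2 and let u : ℝⁿ → ℝⁿ be a Schwartz vector field with Σ_{h=1}^n ∂_h u^h = 0. Define ω^{ij} = ∂_i u^j − ∂_j u^i. Then for every 1 ≤ j ≤ n and every x ∈ ℝⁿ, u^j(x) = −(2π)^{-n/2} ∫_{ℝⁿ} |ξ|^{-2} ( Σ_{i=1}^n i ξ_i 𝓕[ω^{ij}](ξ) ) e^{i x·ξ} dξ, where the integral converges absolutely (this is the Biot–Savart law u^j = −∇(−Δ)^{-1}·ω^{⋆j}). -/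
open MeasureTheory Real Filter Complex
open scoped ENNReal Topology

noncomputable section

open FourierTransform

/-- spatial partial derivative `∂_j`. -/
def pd {n : ℕ} {F : Type*} [NormedAddCommGroup F] [NormedSpace ℝ F]
    (j : Fin n) (f : Spc n → F) (x : Spc n) : F :=
  fderiv ℝ f x (EuclideanSpace.single j 1)

/-- `x · ξ`. -/
def dotp {n : ℕ} (x ξ : Spc n) : ℝ := ∑ h, x h * ξ h

def toC {n : ℕ} (f : SchwartzMap (Spc n) ℝ) : SchwartzMap (Spc n) ℂ :=
  SchwartzMap.bilinLeftCLM (ContinuousLinearMap.lsmul ℝ ℝ : ℝ →L[ℝ] ℂ →L[ℝ] ℂ)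
    (Function.HasTemperateGrowth.const (1 : ℂ)) f

@[simp] lemma toC_apply {n : ℕ} (f : SchwartzMap (Spc n) ℝ) (x : Spc n) :
    toC f x = (f x : ℂ) := by
  show (f x) • (1:ℂ) = _
  simp [Complex.real_smul]

lemma dotp_inner {n : ℕ} (x ξ : Spc n) : dotp x ξ = (inner ℝ x ξ : ℝ) := by
  simp [dotp, PiLp.inner_apply, RCLike.inner_apply, conj_trivial]
  exact Finset.sum_congr rfl fun _ _ => mul_comm _ _

lemma fderiv_toC {n : ℕ} (f : SchwartzMap (Spc n) ℝ) (y m : Spc n) :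
    fderiv ℝ (⇑(toC f)) y m = ((fderiv ℝ (⇑f) y m : ℝ) : ℂ) := by
  have h : (⇑(toC f)) = (⇑Complex.ofRealCLM) ∘ (⇑f) := by
    ext x; simp [Function.comp]
  rw [h, (Complex.ofRealCLM.hasFDerivAt.comp y (f.differentiableAt).hasFDerivAt).fderiv]
  rfl

lemma fourier_pd {n : ℕ} (f : SchwartzMap (Spc n) ℂ) (i : Fin n) (w : Spc n) :
    𝓕 (fun y => fderiv ℝ (⇑f) y (EuclideanSpace.single i 1)) w
      = (2 * π * Complex.I * (w i)) * 𝓕 (⇑f) w := by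
  have hI : Integrable (fun y => fderiv ℝ (⇑f) y) volume := by
    have := (SchwartzMap.fderivCLM ℝ (Spc n) ℂ f).integrable (μ := volume)
    exact this
  have h := Real.fourier_fderiv f.integrable f.differentiable hI
  have h2 : 𝓕 (fun y => fderiv ℝ (⇑f) y (EuclideanSpace.single i 1)) w
      = 𝓕 (fderiv ℝ (⇑f)) w (EuclideanSpace.single i 1) :=
    (Real.fourier_continuousLinearMap_apply hI).symm
  rw [h2, h]
  simp [VectorFourier.fourierSMulRight_apply, EuclideanSpace.inner_single_right, smul_smul,
    Complex.real_smul, smul_eq_mul]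
  have hw : (innerSL ℝ w) (EuclideanSpace.single i (1:ℝ)) = w i := by
    rw [innerSL_apply_apply, EuclideanSpace.inner_single_right]
    simp
  rw [hw]
  ring

lemma integral_kernel {n : ℕ} (f : Spc n → ℂ) (ξ : Spc n) :
    ∫ y : Spc n, f y * Complex.exp (-(Complex.I * (dotp y ξ : ℂ)))
      = 𝓕 f ((2 * π)⁻¹ • ξ) := by
  rw [Real.fourier_eq]
  congr 1
  funext y
  rw [Circle.smul_def, Real.fourierChar_apply]
  have h1 : (inner ℝ y ((2 * π)⁻¹ • ξ) : ℝ) = (2 * π)⁻¹ * dotp y ξ := by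
    rw [real_inner_smul_right, dotp_inner]
  rw [h1]
  have h2 : 2 * π * -((2 * π)⁻¹ * dotp y ξ) = -dotp y ξ := by
    field_simp
  rw [h2, mul_comm]
  congr 1
  push_cast
  ring

lemma div_free {n : ℕ} (u : Fin n → SchwartzMap (Spc n) ℝ)
    (hdiv : ∀ x : Spc n, ∑ h, pd h (fun y => u h y) x = 0) (w : Spc n) :
    ∑ i, (w i : ℂ) * 𝓕 (⇑(toC (u i))) w = 0 := by
  have hint : ∀ i : Fin n, Integrable
      (fun y : Spc n => 𝐞 (-(inner ℝ y w : ℝ)) • fderiv ℝ (⇑(toC (u i))) y (EuclideanSpace.single i 1)) volume := by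
    intro i
    rw [Real.fourierIntegral_convergent_iff]
    have := (LineDeriv.lineDerivOp (EuclideanSpace.single i (1:ℝ)) (toC (u i))).integrable (μ := volume)
    exact this
  have key : ∑ i, 𝓕 (fun y => fderiv ℝ (⇑(toC (u i))) y (EuclideanSpace.single i 1)) w = 0 := by
    have : ∑ i, 𝓕 (fun y => fderiv ℝ (⇑(toC (u i))) y (EuclideanSpace.single i 1)) w
        = ∫ y : Spc n, ∑ i, 𝐞 (-(inner ℝ y w : ℝ)) • fderiv ℝ (⇑(toC (u i))) y (EuclideanSpace.single i 1) := by
      rw [integral_finset_sum _ (fun i _ => hint i)]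
      rfl
    rw [this]
    have hz : ∀ y : Spc n, ∑ i, 𝐞 (-(inner ℝ y w : ℝ)) • fderiv ℝ (⇑(toC (u i))) y (EuclideanSpace.single i 1) = 0 := by
      intro y
      rw [← Finset.smul_sum]
      have : ∑ i, fderiv ℝ (⇑(toC (u i))) y (EuclideanSpace.single i 1) = 0 := by
        simp only [fderiv_toC]
        rw [← Complex.ofReal_sum]
        norm_cast
        exact hdiv y
      rw [this, smul_zero]
    simp only [hz, integral_zero]
  have key2 : (2 * π * Complex.I) * ∑ i, (w i : ℂ) * 𝓕 (⇑(toC (u i))) w = 0 := by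
    rw [Finset.mul_sum]
    rw [← key]
    congr 1
    funext i
    rw [fourier_pd]
    ring
  have h2pi : (2 * π * Complex.I) ≠ 0 := by
    simp [Real.pi_ne_zero, Complex.I_ne_zero, Complex.ofReal_ne_zero]
  exact (mul_eq_zero.mp key2).resolve_left h2pi

lemma fourier_sub {n : ℕ} {f h : Spc n → ℂ} (hf : Integrable f volume)
    (hh : Integrable h volume) (w : Spc n) :
    𝓕 (fun y => f y - h y) w = 𝓕 f w - 𝓕 h w := by
  simp_rw [Real.fourier_eq, smul_sub]
  exact integral_sub ((Real.fourierIntegral_convergent_iff w).2 hf)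
    ((Real.fourierIntegral_convergent_iff w).2 hh)

lemma pd_int {n : ℕ} (f : SchwartzMap (Spc n) ℂ) (i : Fin n) :
    Integrable (fun y => fderiv ℝ (⇑f) y (EuclideanSpace.single i 1)) volume := by
  have := (LineDeriv.lineDerivOp (EuclideanSpace.single i (1:ℝ)) f).integrable (μ := volume)
  exact this


/-- Biot–Savart law. For a divergence-free Schwartz vector field `u` on ℝⁿ
(n ≥ 2) with vorticity tensor `ω^{ij} = ∂_i u^j − ∂_j u^i`, one has, for every `j` and `x`,
`u^j(x) = −(2π)^{-n/2} ∫ |ξ|^{-2} (Σ_i i ξ_i 𝓕[ω^{ij}](ξ)) e^{i x·ξ} dξ`, the integral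
being absolutely convergent. -/
theorem biot_savart (n : ℕ) (hn : 2 ≤ n)
    (u : Fin n → SchwartzMap (Spc n) ℝ)
    (hdiv : ∀ x : Spc n, ∑ h, pd h (fun y => u h y) x = 0)
    (omg : Fin n → Fin n → Spc n → ℝ)
    (homg : ∀ i j x, omg i j x = pd i (fun y => u j y) x - pd j (fun y => u i y) x)
    (Fomg : Fin n → Fin n → Spc n → ℂ)
    (hFomg : ∀ i j ξ, Fomg i j ξ
      = (((2 * π) ^ (-(n : ℝ) / 2) : ℝ) : ℂ)
          * ∫ y : Spc n, (omg i j y : ℂ) * Complex.exp (-(Complex.I * (dotp y ξ : ℂ)))) :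
    ∀ j : Fin n, ∀ x : Spc n,
      Integrable (fun ξ : Spc n =>
        ((‖ξ‖ ^ 2 : ℝ) : ℂ)⁻¹ * (∑ i, Complex.I * (ξ i : ℂ) * Fomg i j ξ)
          * Complex.exp (Complex.I * (dotp x ξ : ℂ))) volume
      ∧ (u j x : ℂ)
          = -(((2 * π) ^ (-(n : ℝ) / 2) : ℝ) : ℂ)
              * ∫ ξ : Spc n,
                  ((‖ξ‖ ^ 2 : ℝ) : ℂ)⁻¹ * (∑ i, Complex.I * (ξ i : ℂ) * Fomg i j ξ)
                    * Complex.exp (Complex.I * (dotp x ξ : ℂ)) := by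

  intro j x
  haveI : Nonempty (Fin n) := ⟨⟨0, by omega⟩⟩
  haveI : Nontrivial (Spc n) := by
    refine ⟨EuclideanSpace.single ⟨0, by omega⟩ 1, 0, ?_⟩
    intro h
    have := congrArg (fun v : Spc n => v ⟨0, by omega⟩) h
    simp [EuclideanSpace.single_apply] at this
  set c : ℝ := (2 * π) ^ (-(n : ℝ) / 2) with hc_def
  have hπ : (0:ℝ) < 2 * π := by positivity
  set g : Fin n → SchwartzMap (Spc n) ℂ := fun i => toC (u i) with hg_def
  set Fg : Fin n → Spc n → ℂ := fun i => 𝓕 (⇑(g i)) with hFg_def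
  -- the omega coerced to ℂ
  have homgC : ∀ i : Fin n, (fun y => ((omg i j y : ℝ) : ℂ))
      = fun y => fderiv ℝ (⇑(g j)) y (EuclideanSpace.single i 1)
          - fderiv ℝ (⇑(g i)) y (EuclideanSpace.single j 1) := by
    intro i
    funext y
    rw [homg, fderiv_toC, fderiv_toC]
    push_cast
    rfl
  -- formula for Fomg in terms of Fourier transforms of u
  have hFomg' : ∀ (i : Fin n) (ξ : Spc n), Fomg i j ξ
      = (c : ℂ) * (Complex.I * (ξ i) * Fg j ((2 * π)⁻¹ • ξ)
          - Complex.I * (ξ j) * Fg i ((2 * π)⁻¹ • ξ)) := by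
    intro i ξ
    rw [hFomg, integral_kernel, homgC i,
      fourier_sub (pd_int (g j) i) (pd_int (g i) j), fourier_pd, fourier_pd]
    have hwi : ∀ (k : Fin n), ((((2 * π)⁻¹ • ξ : Spc n)) k : ℝ) = (2 * π)⁻¹ * ξ k :=
      fun k => rfl
    rw [hwi i, hwi j]
    push_cast
    have h2 : ((2:ℂ) * π) ≠ 0 := by
      simpa using (Complex.ofReal_ne_zero.2 hπ.ne')
    field_simp
    ring
  -- divergence-free in Fourier space
  have hdf : ∀ ξ : Spc n, ∑ i, (ξ i : ℂ) * Fg i ((2 * π)⁻¹ • ξ) = 0 := by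
    intro ξ
    have h0 := div_free u hdiv ((2 * π)⁻¹ • ξ)
    have : ∑ i, (ξ i : ℂ) * Fg i ((2 * π)⁻¹ • ξ)
        = ((2 * π : ℝ) : ℂ) * ∑ i, ((((2 * π)⁻¹ • ξ : Spc n) i : ℝ) : ℂ)
            * Fg i ((2 * π)⁻¹ • ξ) := by
      rw [Finset.mul_sum]
      refine Finset.sum_congr rfl (fun i _ => ?_)
      have hwi : ((((2 * π)⁻¹ • ξ : Spc n)) i : ℝ) = (2 * π)⁻¹ * ξ i := rfl
      rw [hwi]
      push_cast
      have h2 : ((2:ℂ) * π) ≠ 0 := by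
        simpa using (Complex.ofReal_ne_zero.2 hπ.ne')
      field_simp
    rw [this, h0, mul_zero]
  -- norm identity
  have hnorm : ∀ ξ : Spc n, ((‖ξ‖ ^ 2 : ℝ) : ℂ) = ∑ i, ((ξ i : ℝ) : ℂ) ^ 2 := by
    intro ξ
    have : (‖ξ‖ ^ 2 : ℝ) = ∑ i, (ξ i) ^ 2 := by
      rw [EuclideanSpace.norm_eq]
      rw [Real.sq_sqrt (by positivity)]
      simp [_root_.sq_abs]
    rw [this]
    push_cast
    rfl
  -- the key pointwise identity for the sum
  have hkey : ∀ ξ : Spc n, (∑ i, Complex.I * (ξ i : ℂ) * Fomg i j ξ)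
      = -(c : ℂ) * ((‖ξ‖ ^ 2 : ℝ) : ℂ) * Fg j ((2 * π)⁻¹ • ξ) := by
    intro ξ
    have hterm : ∀ i : Fin n, Complex.I * (ξ i : ℂ) * Fomg i j ξ
        = (c : ℂ) * (-(((ξ i : ℂ)) ^ 2 * Fg j ((2 * π)⁻¹ • ξ))
            + (ξ j : ℂ) * ((ξ i : ℂ) * Fg i ((2 * π)⁻¹ • ξ))) := by
      intro i
      rw [hFomg' i ξ]
      linear_combination ((c : ℂ) * (ξ i : ℂ)^2 * Fg j ((2 * π)⁻¹ • ξ)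
        - (c : ℂ) * (ξ i : ℂ) * (ξ j : ℂ) * Fg i ((2 * π)⁻¹ • ξ)) * Complex.I_sq
    calc (∑ i, Complex.I * (ξ i : ℂ) * Fomg i j ξ)
        = ∑ i, (c : ℂ) * (-(((ξ i : ℂ)) ^ 2 * Fg j ((2 * π)⁻¹ • ξ))
            + (ξ j : ℂ) * ((ξ i : ℂ) * Fg i ((2 * π)⁻¹ • ξ))) :=
          Finset.sum_congr rfl (fun i _ => hterm i)
      _ = (c : ℂ) * (-((∑ i, ((ξ i : ℂ)) ^ 2) * Fg j ((2 * π)⁻¹ • ξ))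
            + (ξ j : ℂ) * (∑ i, (ξ i : ℂ) * Fg i ((2 * π)⁻¹ • ξ))) := by
          rw [← Finset.mul_sum, Finset.sum_add_distrib, ← Finset.mul_sum,
            Finset.sum_neg_distrib, ← Finset.sum_mul]
      _ = -(c : ℂ) * ((‖ξ‖ ^ 2 : ℝ) : ℂ) * Fg j ((2 * π)⁻¹ • ξ) := by
          rw [hdf ξ, hnorm ξ]
          ring
  -- integrability pieces
  have hFgInt : Integrable (Fg j) volume := by
    have := (SchwartzMap.fourierTransformCLM ℂ (g j)).integrable (μ := volume)
    simpa [SchwartzMap.fourier_coe] using this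
  have hcomp : Integrable (fun ξ : Spc n => Fg j ((2 * π)⁻¹ • ξ)) volume :=
    hFgInt.comp_smul (inv_ne_zero hπ.ne')
  have hdotcont : Continuous (fun ξ : Spc n => dotp x ξ) := by
    apply continuous_finset_sum
    intro h _
    exact continuous_const.mul (EuclideanSpace.proj h).continuous
  have hexpcont : Continuous (fun ξ : Spc n => Complex.exp (Complex.I * (dotp x ξ : ℂ))) :=
    Complex.continuous_exp.comp (continuous_const.mul (Complex.continuous_ofReal.comp hdotcont))
  have hexp1 : ∀ ξ : Spc n, ‖Complex.exp (Complex.I * (dotp x ξ : ℂ))‖ ≤ 1 := by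
    intro ξ
    rw [mul_comm]
    exact le_of_eq (Complex.norm_exp_ofReal_mul_I (dotp x ξ))
  have hG_int : Integrable (fun ξ : Spc n =>
      -(c : ℂ) * (Fg j ((2 * π)⁻¹ • ξ) * Complex.exp (Complex.I * (dotp x ξ : ℂ)))) volume := by
    have h1 : Integrable (fun ξ : Spc n => -(c : ℂ) * Fg j ((2 * π)⁻¹ • ξ)) volume :=
      hcomp.const_mul _
    have h2 := h1.bdd_mul hexpcont.aestronglyMeasurable (Filter.Eventually.of_forall hexp1)
    exact h2.congr (Filter.Eventually.of_forall (fun ξ => by ring))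
  -- a.e. equality with the integrand
  have hae : ∀ᵐ ξ : Spc n ∂volume, ξ ≠ 0 := by
    have h0 : volume ({(0 : Spc n)} : Set (Spc n)) = 0 := measure_singleton 0
    rw [ae_iff]
    convert h0 using 2
    ext ξ
    simp
  have haeq : (fun ξ : Spc n =>
        -(c : ℂ) * (Fg j ((2 * π)⁻¹ • ξ) * Complex.exp (Complex.I * (dotp x ξ : ℂ))))
      =ᵐ[volume] (fun ξ : Spc n =>
        ((‖ξ‖ ^ 2 : ℝ) : ℂ)⁻¹ * (∑ i, Complex.I * (ξ i : ℂ) * Fomg i j ξ)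
          * Complex.exp (Complex.I * (dotp x ξ : ℂ))) := by
    filter_upwards [hae] with ξ hξ
    rw [hkey ξ]
    have hnz' : ((‖ξ‖ : ℝ) : ℂ) ≠ 0 :=
      Complex.ofReal_ne_zero.2 (norm_ne_zero_iff.2 hξ)
    field_simp [hnz']
  refine ⟨hG_int.congr haeq, ?_⟩
  -- compute the integral
  have hval : (∫ ξ : Spc n,
        ((‖ξ‖ ^ 2 : ℝ) : ℂ)⁻¹ * (∑ i, Complex.I * (ξ i : ℂ) * Fomg i j ξ)
          * Complex.exp (Complex.I * (dotp x ξ : ℂ)))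
      = -(c : ℂ) * ((((2 * π) ^ n : ℝ)) : ℂ) * (u j x : ℂ) := by
    rw [← integral_congr_ae haeq, integral_const_mul]
    have hHeq : (fun ξ : Spc n =>
          Fg j ((2 * π)⁻¹ • ξ) * Complex.exp (Complex.I * (dotp x ξ : ℂ)))
        = fun ξ : Spc n =>
            (fun v : Spc n => 𝐞 ((inner ℝ v x : ℝ)) • Fg j v) ((2 * π)⁻¹ • ξ) := by
      funext ξ
      simp only
      rw [Circle.smul_def, Real.fourierChar_apply, mul_comm]
      congr 1
      rw [real_inner_smul_left]
      have h9 : 2 * π * ((2 * π)⁻¹ * (inner ℝ ξ x : ℝ)) = dotp x ξ := by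
        rw [dotp_inner, real_inner_comm]
        field_simp
      rw [h9]
      ring
    have hcs := MeasureTheory.Measure.integral_comp_smul volume
      (fun v : Spc n => 𝐞 ((inner ℝ v x : ℝ)) • Fg j v) ((2 * π)⁻¹)
    rw [hHeq, hcs, finrank_euclideanSpace_fin]
    have hinv : (∫ v : Spc n, 𝐞 ((inner ℝ v x : ℝ)) • Fg j v) = ((u j x : ℝ) : ℂ) := by
      have h1 : 𝓕⁻ (𝓕 (⇑(g j))) x = (g j) x :=
        MeasureTheory.Integrable.fourierInv_fourier_eq (g j).integrable hFgInt
          ((g j).continuous.continuousAt)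
      rw [Real.fourierInv_eq] at h1
      rw [show (g j) x = ((u j x : ℝ) : ℂ) from by simp [hg_def]] at h1
      exact h1
    rw [hinv]
    have habs : |(((2 * π : ℝ))⁻¹ ^ n)⁻¹| = (2 * π) ^ n := by
      rw [inv_pow, inv_inv, abs_of_pos (by positivity)]
    rw [habs, real_smul]
    push_cast
    ring
  rw [hval]
  have hcc : c * (c * (2 * π) ^ n) = 1 := by
    rw [hc_def, ← Real.rpow_natCast (2 * π) n, ← Real.rpow_add hπ, ← Real.rpow_add hπ]
    have h9 : (-(n : ℝ) / 2) + ((-(n : ℝ) / 2) + (n : ℝ)) = 0 := by ring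
    rw [h9, Real.rpow_zero]
  calc (u j x : ℂ) = ((c * (c * (2 * π) ^ n) : ℝ) : ℂ) * (u j x : ℂ) := by
        rw [hcc]; simp
    _ = -(c : ℂ) * (-(c : ℂ) * ((((2 * π) ^ n : ℝ)) : ℂ) * (u j x : ℂ)) := by
        push_cast; ring
end
end
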